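/- Let K = ℚ(u,v) be the field of rational functions in two variables u, v over ℚ and set q = uv. Let g ≥ 1 be an integer and set P = (1+u)^g(1+v)^g, Q = (1+u)^{2g}(1+v)^{2g}, R = (1−u²)^g(1−v²)^g, W = (1+u²v)^g(1+uv²)^g, elements of K. Then for all integers N₁, N₂, the following identity holds in the field K(x) of rational functions in a further variable x: P·[ ((q^{N₂}−q^{N₁})/(1−q))·q^{g−1}·(Q/(1−q))·( q^{N₁}/(1−q^{−1}x) − q^{N₂+2}x/(1−q²x) − 1 ) + ((q^{2N₂}−q^{2N₁})/(1−q))·( 2PW − Q(1+2q^{g+1}−q²) − R(1−q)² )/(2(1−q)(1−q²)) + ((q^{2N₂}−q^{N₂}−q^{2N₁}+q^{N₁})/(1−q))·(Q−P)·((1−q^{g−1})/(1−q)) + ((q^{2N₂−1}−q^{N₂−1}−q^{2N₁−1}+q^{N₁−1})/(1−q))·P·((1−q^{g})/(1−q)) + (1/2)·( ((q^{2N₁}−2q^{N₁}−q^{2N₂}+2q^{N₂})/(1−q)²)·(Q−P) + ((q^{2N₂}−q^{2N₁})/(1−q²))·(R−P) ) + P·( q^{N₂}+q^{N₂−1}−q^{2N₂−1}−q^{N₁}−q^{N₁−1}+q^{2N₁−1}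 )/((1−q)(1−q²)) ] = Q·[ (q^{2N₂}−q^{2N₁})·(W−q^{g}P)/((1−q)²(1−q²)) − ( q^{g−1}P/((1−q)²(1+q)) )·( q^{2N₁+1}(1+q^{−2}x)/(1−q^{−1}x) + q^{2N₂}(1+q³x)/(1−q²x) − (1+q) q^{N₁+N₂}(1−qx²)/((1−q^{−1}x)(1−q²x)) ) ]. -/

import Mathlib

noncomputable section

/-- The field `K = ℚ(u,v)` of rational functions in two variables over `ℚ`. -/
abbrev Kuv : Type := FractionRing (MvPolynomial (Fin 2) ℚ)

/-- The field `K(x)` of rational functions in a further variable `x` over `K`. -/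
abbrev Kx : Type := RatFunc Kuv

/-- The rational function `u`, viewed in `K(x)`. -/
def uL : Kx := RatFunc.C (algebraMap (MvPolynomial (Fin 2) ℚ) Kuv (MvPolynomial.X 0))

/-- The rational function `v`, viewed in `K(x)`. -/
def vL : Kx := RatFunc.C (algebraMap (MvPolynomial (Fin 2) ℚ) Kuv (MvPolynomial.X 1))

/-- `q = uv`, viewed in `K(x)`. -/
def qL : Kx := uL * vL

/-- The variable `x` of `K(x)`. -/
def xL : Kx := RatFunc.X

/-- `P = (1+u)^g (1+v)^g`. -/
def PL (g : ℕ) : Kx := (1 + uL) ^ g * (1 + vL) ^ g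

/-- `Q = (1+u)^{2g} (1+v)^{2g}`. -/
def QL (g : ℕ) : Kx := (1 + uL) ^ (2 * g) * (1 + vL) ^ (2 * g)

/-- `R = (1-u²)^g (1-v²)^g`. -/
def RL (g : ℕ) : Kx := (1 - uL ^ 2) ^ g * (1 - vL ^ 2) ^ g

/-- `W = (1+u²v)^g (1+uv²)^g`. -/
def WL (g : ℕ) : Kx := (1 + uL ^ 2 * vL) ^ g * (1 + uL * vL ^ 2) ^ g


private lemma flip_comp_inj : Function.Injective (fun p : MvPolynomial (Fin 2) ℚ =>
    RatFunc.C (algebraMap (MvPolynomial (Fin 2) ℚ) Kuv p)) :=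
  fun _ _ h =>
    IsFractionRing.injective (MvPolynomial (Fin 2) ℚ) Kuv (RatFunc.C.injective h)

private lemma flip_one_sub_C_mul_X_ne_zero (a : Kuv) :
    1 - RatFunc.C a * RatFunc.X ≠ 0 := by
  intro hc
  have h2 : (algebraMap (Polynomial Kuv) Kx) (Polynomial.C a * Polynomial.X) =
      algebraMap (Polynomial Kuv) Kx 1 := by
    simp only [map_mul, map_one, RatFunc.algebraMap_C, RatFunc.algebraMap_X]
    linear_combination -hc
  have h3 := IsFractionRing.injective (Polynomial Kuv) Kx h2
  have := congrArg (fun p => Polynomial.coeff p 0) h3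
  simp at this

private lemma flip_qL_eq_C : qL = RatFunc.C (algebraMap (MvPolynomial (Fin 2) ℚ) Kuv
    (MvPolynomial.X 0 * MvPolynomial.X 1)) := by
  simp [qL, uL, vL, map_mul]

private lemma flip_qL_ne_zero : qL ≠ 0 := by
  have h : (MvPolynomial.X 0 * MvPolynomial.X 1 : MvPolynomial (Fin 2) ℚ) ≠ 0 :=
    mul_ne_zero (MvPolynomial.X_ne_zero _) (MvPolynomial.X_ne_zero _)
  rw [flip_qL_eq_C]
  intro hc
  exact h (flip_comp_inj (by simpa using hc))

private lemma flip_one_sub_qL_ne_zero : 1 - qL ≠ 0 := by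
  have h : (MvPolynomial.X 0 * MvPolynomial.X 1 : MvPolynomial (Fin 2) ℚ) ≠ 1 := by
    intro h
    have := congrArg MvPolynomial.constantCoeff h
    simp at this
  intro hc
  apply h
  apply flip_comp_inj
  show RatFunc.C (algebraMap (MvPolynomial (Fin 2) ℚ) Kuv (MvPolynomial.X 0 * MvPolynomial.X 1)) =
    RatFunc.C (algebraMap (MvPolynomial (Fin 2) ℚ) Kuv 1)
  rw [← flip_qL_eq_C, map_one, map_one]
  linear_combination -hc

private lemma flip_one_add_qL_ne_zero : 1 + qL ≠ 0 := by
  have h : (MvPolynomial.X 0 * MvPolynomial.X 1 : MvPolynomial (Fin 2) ℚ) ≠ -1 := by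
    intro h
    have := congrArg MvPolynomial.constantCoeff h
    simp at this
  intro hc
  apply h
  apply flip_comp_inj
  show RatFunc.C (algebraMap (MvPolynomial (Fin 2) ℚ) Kuv (MvPolynomial.X 0 * MvPolynomial.X 1)) =
    RatFunc.C (algebraMap (MvPolynomial (Fin 2) ℚ) Kuv (-1))
  rw [← flip_qL_eq_C, map_neg, map_neg, map_one, map_one]
  linear_combination hc

set_option maxHeartbeats 1000000 in
private lemma flip_aux {F : Type*} [Field F] [CharZero F] (q P R W a b c Y1 Y2 : F)
    (hq : q ≠ 0) (h1 : 1 - q ≠ 0) (h1' : 1 + q ≠ 0) (h2 : 1 - q ^ 2 ≠ 0) :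
    P *
      ( ((b - a) / (1 - q)) * (c * q⁻¹) * (P ^ 2 / (1 - q)) *
          ( a * Y1 - b * (Y2 - 1) - 1 ) +
        ((b * b - a * a) / (1 - q)) *
          ( (2 * P * W - P ^ 2 * (1 + 2 * (c * q) - q ^ 2) -
              R * (1 - q) ^ 2) / (2 * (1 - q) * (1 - q ^ 2)) ) +
        ((b * b - b - a * a + a) / (1 - q)) * (P ^ 2 - P) * ((1 - c * q⁻¹) / (1 - q)) +
        ((b * b * q⁻¹ - b * q⁻¹ - a * a * q⁻¹ + a * q⁻¹) / (1 - q)) * P * ((1 - c) / (1 - q)) +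
        (1 / 2) *
          ( ((a * a - 2 * a - b * b + 2 * b) / (1 - q) ^ 2) * (P ^ 2 - P) +
            ((b * b - a * a) / (1 - q ^ 2)) * (R - P) ) +
        P * ( (b + b * q⁻¹ - b * b * q⁻¹ - a - a * q⁻¹ + a * a * q⁻¹) / ((1 - q) * (1 - q ^ 2)) ) ) =
    P ^ 2 *
      ( (b * b - a * a) * ((W - c * P) / ((1 - q) ^ 2 * (1 - q ^ 2))) -
        (c * q⁻¹ * P / ((1 - q) ^ 2 * (1 + q))) *
          ( a * a * ((1 + q) * Y1 - 1) + b * b * ((1 + q) * Y2 - q) -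
            (1 + q) * (a * b) * (Y1 + Y2 - 1) ) ) := by
  have hD : (2 : F) * q * (1 - q) ^ 2 * (1 - q ^ 2) * (1 + q) ≠ 0 := by
    refine mul_ne_zero (mul_ne_zero (mul_ne_zero (mul_ne_zero two_ne_zero hq) ?_) h2) h1'
    exact pow_ne_zero _ h1
  have e1 : ((b - a) / (1 - q)) * (c * q⁻¹) * (P ^ 2 / (1 - q)) *
      ( a * Y1 - b * (Y2 - 1) - 1 ) =
      ((b - a) * c * P ^ 2 * (a * Y1 - b * (Y2 - 1) - 1) * (2 * (1 - q ^ 2) * (1 + q))) /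
        (2 * q * (1 - q) ^ 2 * (1 - q ^ 2) * (1 + q)) := by
    rw [eq_div_iff hD]; field_simp
  have e2 : ((b * b - a * a) / (1 - q)) *
      ( (2 * P * W - P ^ 2 * (1 + 2 * (c * q) - q ^ 2) -
          R * (1 - q) ^ 2) / (2 * (1 - q) * (1 - q ^ 2)) ) =
      ((b * b - a * a) * (2 * P * W - P ^ 2 * (1 + 2 * (c * q) - q ^ 2) -
          R * (1 - q) ^ 2) * (q * (1 + q))) /
        (2 * q * (1 - q) ^ 2 * (1 - q ^ 2) * (1 + q)) := by
    rw [eq_div_iff hD]; field_simp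
  have e3 : ((b * b - b - a * a + a) / (1 - q)) * (P ^ 2 - P) * ((1 - c * q⁻¹) / (1 - q)) =
      ((b * b - b - a * a + a) * (P ^ 2 - P) * (q - c) * (2 * (1 - q ^ 2) * (1 + q))) /
        (2 * q * (1 - q) ^ 2 * (1 - q ^ 2) * (1 + q)) := by
    rw [eq_div_iff hD]; field_simp
  have e4 : ((b * b * q⁻¹ - b * q⁻¹ - a * a * q⁻¹ + a * q⁻¹) / (1 - q)) * P *
      ((1 - c) / (1 - q)) =
      ((b * b - b - a * a + a) * P * (1 - c) * (2 * (1 - q ^ 2) * (1 + q))) /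
        (2 * q * (1 - q) ^ 2 * (1 - q ^ 2) * (1 + q)) := by
    rw [eq_div_iff hD]; field_simp
  have e5 : (1 / 2 : F) *
      ( ((a * a - 2 * a - b * b + 2 * b) / (1 - q) ^ 2) * (P ^ 2 - P) +
        ((b * b - a * a) / (1 - q ^ 2)) * (R - P) ) =
      ((a * a - 2 * a - b * b + 2 * b) * (P ^ 2 - P) * (q * (1 - q ^ 2) * (1 + q)) +
        (b * b - a * a) * (R - P) * (q * (1 - q) ^ 2 * (1 + q))) /
        (2 * q * (1 - q) ^ 2 * (1 - q ^ 2) * (1 + q)) := by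
    rw [eq_div_iff hD]; field_simp
  have e6 : P * ( (b + b * q⁻¹ - b * b * q⁻¹ - a - a * q⁻¹ + a * a * q⁻¹) /
      ((1 - q) * (1 - q ^ 2)) ) =
      (P * (b * q + b - b * b - a * q - a + a * a) * (2 * (1 - q) * (1 + q))) /
        (2 * q * (1 - q) ^ 2 * (1 - q ^ 2) * (1 + q)) := by
    rw [eq_div_iff hD]; field_simp
  have f1 : (b * b - a * a) * ((W - c * P) / ((1 - q) ^ 2 * (1 - q ^ 2))) =
      ((b * b - a * a) * (W - c * P) * (2 * q * (1 + q))) /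
        (2 * q * (1 - q) ^ 2 * (1 - q ^ 2) * (1 + q)) := by
    rw [eq_div_iff hD]; field_simp
  have f2 : (c * q⁻¹ * P / ((1 - q) ^ 2 * (1 + q))) *
      ( a * a * ((1 + q) * Y1 - 1) + b * b * ((1 + q) * Y2 - q) -
        (1 + q) * (a * b) * (Y1 + Y2 - 1) ) =
      (c * P * ( a * a * ((1 + q) * Y1 - 1) + b * b * ((1 + q) * Y2 - q) -
        (1 + q) * (a * b) * (Y1 + Y2 - 1) ) * (2 * (1 - q ^ 2))) /
        (2 * q * (1 - q) ^ 2 * (1 - q ^ 2) * (1 + q)) := by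
    rw [eq_div_iff hD]; field_simp
  rw [e1, e2, e3, e4, e5, e6, f1, f2]
  rw [← add_div, ← add_div, ← add_div, ← add_div,
    ← add_div, div_sub_div_same]
  rw [mul_div_assoc', mul_div_assoc']
  rw [div_eq_div_iff hD hD]
  ring

set_option maxHeartbeats 1000000 in

/-- The rational-function identity of Proposition 6.3 of the paper, collecting the six
strata contributions of the flip loci at an even critical value into the closed form of
the flip difference `Cₙ` (here `N₁ = d₁-d₂-n`, `N₂ = g-1-d₁+3n/2`). -/
theorem flip_difference_strata_identity (g : ℕ) (hg : 1 ≤ g) (N₁ N₂ : ℤ) :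
    PL g *
      ( ((qL ^ N₂ - qL ^ N₁) / (1 - qL)) * qL ^ ((g : ℤ) - 1) * (QL g / (1 - qL)) *
          ( qL ^ N₁ / (1 - qL⁻¹ * xL) - qL ^ (N₂ + 2) * xL / (1 - qL ^ 2 * xL) - 1 ) +
        ((qL ^ (2 * N₂) - qL ^ (2 * N₁)) / (1 - qL)) *
          ( (2 * PL g * WL g - QL g * (1 + 2 * qL ^ (g + 1) - qL ^ 2) -
              RL g * (1 - qL) ^ 2) / (2 * (1 - qL) * (1 - qL ^ 2)) ) +
        ((qL ^ (2 * N₂) - qL ^ N₂ - qL ^ (2 * N₁) + qL ^ N₁) / (1 - qL)) *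
          (QL g - PL g) * ((1 - qL ^ ((g : ℤ) - 1)) / (1 - qL)) +
        ((qL ^ (2 * N₂ - 1) - qL ^ (N₂ - 1) - qL ^ (2 * N₁ - 1) + qL ^ (N₁ - 1)) /
            (1 - qL)) * PL g * ((1 - qL ^ g) / (1 - qL)) +
        (1 / 2) *
          ( ((qL ^ (2 * N₁) - 2 * qL ^ N₁ - qL ^ (2 * N₂) + 2 * qL ^ N₂) / (1 - qL) ^ 2) *
              (QL g - PL g) +
            ((qL ^ (2 * N₂) - qL ^ (2 * N₁)) / (1 - qL ^ 2)) * (RL g - PL g) ) +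
        PL g *
          ( (qL ^ N₂ + qL ^ (N₂ - 1) - qL ^ (2 * N₂ - 1) - qL ^ N₁ - qL ^ (N₁ - 1) +
              qL ^ (2 * N₁ - 1)) / ((1 - qL) * (1 - qL ^ 2)) ) ) =
    QL g *
      ( (qL ^ (2 * N₂) - qL ^ (2 * N₁)) *
          ((WL g - qL ^ g * PL g) / ((1 - qL) ^ 2 * (1 - qL ^ 2))) -
        (qL ^ ((g : ℤ) - 1) * PL g / ((1 - qL) ^ 2 * (1 + qL))) *
          ( qL ^ (2 * N₁ + 1) * (1 + qL ^ (-2 : ℤ) * xL) / (1 - qL⁻¹ * xL) +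
            qL ^ (2 * N₂) * (1 + qL ^ 3 * xL) / (1 - qL ^ 2 * xL) -
            (1 + qL) * qL ^ (N₁ + N₂) * (1 - qL * xL ^ 2) /
              ((1 - qL⁻¹ * xL) * (1 - qL ^ 2 * xL)) ) ) := by
  have hq := flip_qL_ne_zero
  have h1 := flip_one_sub_qL_ne_zero
  have h1' := flip_one_add_qL_ne_zero
  have h2 : 1 - qL ^ 2 ≠ 0 := by
    have e : 1 - qL ^ 2 = (1 - qL) * (1 + qL) := by ring
    rw [e]; exact mul_ne_zero h1 h1'
  set k : Kuv := algebraMap (MvPolynomial (Fin 2) ℚ) Kuv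
    (MvPolynomial.X 0 * MvPolynomial.X 1) with hk
  have hqC : qL = RatFunc.C k := flip_qL_eq_C
  have hx1 : 1 - qL⁻¹ * xL ≠ 0 := by
    rw [hqC, ← map_inv₀]
    exact flip_one_sub_C_mul_X_ne_zero _
  have hx2 : 1 - qL ^ 2 * xL ≠ 0 := by
    rw [hqC, ← map_pow]
    exact flip_one_sub_C_mul_X_ne_zero _
  have hQ : QL g = PL g ^ 2 := by
    simp only [QL, PL, two_mul, pow_add]; ring
  have hz2 : ∀ m : ℤ, qL ^ (2 * m) = qL ^ m * qL ^ m := fun m => by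
    rw [two_mul, zpow_add₀ hq]
  have hzs : ∀ m : ℤ, qL ^ (m - 1) = qL ^ m * qL⁻¹ := fun m => by
    rw [zpow_sub₀ hq, zpow_one, div_eq_mul_inv]
  have hza : qL ^ (N₂ + 2) = qL ^ N₂ * qL ^ 2 := by
    rw [zpow_add₀ hq, show ((2:ℤ)) = ((2:ℕ):ℤ) by norm_num, zpow_natCast]
  have hzb : qL ^ (2 * N₁ + 1) = qL ^ N₁ * qL ^ N₁ * qL := by
    rw [zpow_add₀ hq, hz2, zpow_one]
  have hzc : qL ^ (N₁ + N₂) = qL ^ N₁ * qL ^ N₂ := zpow_add₀ hq _ _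
  have hzn : qL ^ (-2 : ℤ) = (qL ^ 2)⁻¹ := by
    rw [show ((-2:ℤ)) = -((2:ℕ):ℤ) by norm_num, zpow_neg, zpow_natCast]
  have hgp : qL ^ (g + 1) = qL ^ g * qL := pow_succ qL g
  rw [hQ]
  simp only [hzs, hz2, hza, hzb, hzc, hzn, hgp, zpow_natCast]
  generalize qL ^ N₁ = a
  generalize qL ^ N₂ = b
  generalize qL ^ g = c
  have hA : a / (1 - qL⁻¹ * xL) = a * (1 - qL⁻¹ * xL)⁻¹ := div_eq_mul_inv _ _
  have hB : b * qL ^ 2 * xL / (1 - qL ^ 2 * xL) = b * ((1 - qL ^ 2 * xL)⁻¹ - 1) := by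
    rw [div_eq_iff hx2]
    have expand : b * ((1 - qL ^ 2 * xL)⁻¹ - 1) * (1 - qL ^ 2 * xL) =
        b * ((1 - qL ^ 2 * xL)⁻¹ * (1 - qL ^ 2 * xL)) - b * (1 - qL ^ 2 * xL) := by
      ring
    rw [expand, inv_mul_cancel₀ hx2]
    ring
  have hC : a * a * qL * (1 + (qL ^ 2)⁻¹ * xL) / (1 - qL⁻¹ * xL) =
      a * a * ((1 + qL) * (1 - qL⁻¹ * xL)⁻¹ - 1) := by
    rw [div_eq_iff hx1]
    have expand : a * a * ((1 + qL) * (1 - qL⁻¹ * xL)⁻¹ - 1) * (1 - qL⁻¹ * xL) =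
        a * a * ((1 + qL) * ((1 - qL⁻¹ * xL)⁻¹ * (1 - qL⁻¹ * xL)) - (1 - qL⁻¹ * xL)) := by
      ring
    rw [expand, inv_mul_cancel₀ hx1]
    have hinv : qL * (qL ^ 2)⁻¹ = qL⁻¹ := by
      rw [sq, mul_inv, ← mul_assoc, mul_inv_cancel₀ hq, one_mul]
    linear_combination (a * a * xL) * hinv
  have hD2 : b * b * (1 + qL ^ 3 * xL) / (1 - qL ^ 2 * xL) =
      b * b * ((1 + qL) * (1 - qL ^ 2 * xL)⁻¹ - qL) := by
    rw [div_eq_iff hx2]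
    have expand : b * b * ((1 + qL) * (1 - qL ^ 2 * xL)⁻¹ - qL) * (1 - qL ^ 2 * xL) =
        b * b * ((1 + qL) * ((1 - qL ^ 2 * xL)⁻¹ * (1 - qL ^ 2 * xL)) -
          qL * (1 - qL ^ 2 * xL)) := by
      ring
    rw [expand, inv_mul_cancel₀ hx2]
    ring
  have hE : (1 + qL) * (a * b) * (1 - qL * xL ^ 2) /
      ((1 - qL⁻¹ * xL) * (1 - qL ^ 2 * xL)) =
      (1 + qL) * (a * b) * ((1 - qL⁻¹ * xL)⁻¹ + (1 - qL ^ 2 * xL)⁻¹ - 1) := by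
    rw [div_eq_iff (mul_ne_zero hx1 hx2)]
    have expand : (1 + qL) * (a * b) * ((1 - qL⁻¹ * xL)⁻¹ + (1 - qL ^ 2 * xL)⁻¹ - 1) *
        ((1 - qL⁻¹ * xL) * (1 - qL ^ 2 * xL)) =
        (1 + qL) * (a * b) * (((1 - qL⁻¹ * xL)⁻¹ * (1 - qL⁻¹ * xL)) * (1 - qL ^ 2 * xL) +
          ((1 - qL ^ 2 * xL)⁻¹ * (1 - qL ^ 2 * xL)) * (1 - qL⁻¹ * xL) -
          (1 - qL⁻¹ * xL) * (1 - qL ^ 2 * xL)) := by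
      ring
    rw [expand, inv_mul_cancel₀ hx1, inv_mul_cancel₀ hx2]
    have hinv2 : qL⁻¹ * qL ^ 2 = qL := by
      rw [sq, ← mul_assoc, inv_mul_cancel₀ hq, one_mul]
    linear_combination ((1 + qL) * (a * b) * xL ^ 2) * hinv2
  rw [hA, hB, hC, hD2, hE]
  generalize (1 - qL⁻¹ * xL)⁻¹ = Y1
  generalize (1 - qL ^ 2 * xL)⁻¹ = Y2
  haveI : CharZero Kx :=
    charZero_of_injective_ringHom
      (f := (RatFunc.C : Kuv →+* Kx).comp (algebraMap (MvPolynomial (Fin 2) ℚ) Kuv))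
      (fun x y h => IsFractionRing.injective (MvPolynomial (Fin 2) ℚ) Kuv
        (RatFunc.C.injective h))
  exact flip_aux qL (PL g) (RL g) (WL g) a b c Y1 Y2 hq h1 h1' h2


end
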